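/- Suppose Γ̃ and Γ_w are symmetric matrices with Γ̃ ≻ 0, and H Γ̃ Hᵀ ⪯ γ Γ̃ for some γ ∈ [0,1). If Γ_{i,j} = H^{j-i} Γ̃ for i ≤ j, then Γ_{i,j} Γ̃^{-1} Γ_{i,j}ᵀ ⪯ γ^{j-i} Γ̃ for all i ≤ j. -/

import Mathlib

open Matrix

/-- The Loewner order on real matrices: `A ⪯ B` iff `B - A` is positive semidefinite. -/
lemma psd_smul {n : ℕ} {A : Matrix (Fin n) (Fin n) ℝ} (hA : A.PosSemidef)
    {c : ℝ} (hc : 0 ≤ c) : (c • A).PosSemidef := by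
  have h1 : (c • A).IsHermitian := by
    simp [Matrix.IsHermitian, conjTranspose_smul]; rw [show Aᵀ = A from hA.1.eq]
  refine posSemidef_iff_dotProduct_mulVec.mpr ⟨h1, fun x => ?_⟩
  rw [smul_mulVec, dotProduct_smul, smul_eq_mul]
  exact mul_nonneg hc ((posSemidef_iff_dotProduct_mulVec.mp hA).2 x)

/-- The Loewner order on real matrices: `A ⪯ B` iff `B - A` is positive semidefinite. -/
def LoeLE {n : ℕ} (A B : Matrix (Fin n) (Fin n) ℝ) : Prop := (B - A).PosSemidef

/-- if `H Γ̃ Hᵀ ⪯ γ Γ̃` with `Γ̃ ≻ 0` and `Γ_{i,j} = H^{j-i} Γ̃`,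
then `Γ_{i,j} Γ̃⁻¹ Γ_{i,j}ᵀ ⪯ γ^{j-i} Γ̃` for all `i ≤ j`. -/
theorem stmt_15 {n : ℕ} (H Γt : Matrix (Fin n) (Fin n) ℝ)
    (hΓt : Γt.PosDef) (γ : ℝ) (hγ0 : 0 ≤ γ) (hγ1 : γ < 1)
    (hH : LoeLE (H * Γt * Hᵀ) (γ • Γt))
    (Γc : ℕ → ℕ → Matrix (Fin n) (Fin n) ℝ)
    (hΓc : ∀ i j, i ≤ j → Γc i j = H ^ (j - i) * Γt) :
    ∀ i j, i ≤ j → LoeLE (Γc i j * Γt⁻¹ * (Γc i j)ᵀ) (γ ^ (j - i) • Γt) := by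
  have key : ∀ k : ℕ, LoeLE (H ^ k * Γt * (H ^ k)ᵀ) (γ ^ k • Γt) := by
    intro k
    induction k with
    | zero =>
      simp only [pow_zero, one_mul, transpose_one, mul_one, one_smul, LoeLE, sub_self]
      exact PosSemidef.zero
    | succ k ih =>
      unfold LoeLE at *
      have heq : γ ^ (k + 1) • Γt - H ^ (k + 1) * Γt * (H ^ (k + 1))ᵀ =
          γ ^ k • (γ • Γt - H * Γt * Hᵀ) +
            H * (γ ^ k • Γt - H ^ k * Γt * (H ^ k)ᵀ) * Hᵀ := by
        have h1 : H ^ (k + 1) = H * H ^ k := by rw [pow_succ']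
        rw [h1, transpose_mul]
        ring_nf
        rw [smul_sub, smul_smul]
        simp only [Matrix.mul_sub, Matrix.sub_mul, Matrix.mul_smul, Matrix.smul_mul]
        abel_nf
        ring_nf
        noncomm_ring
      rw [heq]
      refine PosSemidef.add (psd_smul hH (pow_nonneg hγ0 k)) ?_
      have := ih.mul_mul_conjTranspose_same H
      simpa using this
  intro i j hij
  rw [hΓc i j hij]
  have hsym : Γtᵀ = Γt := hΓt.isHermitian.eq
  have hinv : Γt * Γt⁻¹ = 1 := mul_nonsing_inv Γt (isUnit_iff_ne_zero.mpr hΓt.det_pos.ne')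
  have : H ^ (j - i) * Γt * Γt⁻¹ * (H ^ (j - i) * Γt)ᵀ = H ^ (j - i) * Γt * (H ^ (j - i))ᵀ := by
    rw [transpose_mul, hsym, Matrix.mul_assoc (H ^ (j-i)) Γt Γt⁻¹, hinv, mul_one,
      Matrix.mul_assoc]
  rw [this]
  exact key (j - i)
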